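/- For an odd prime p, any N with 1 ≤ N ≤ p-1, and any residue j mod p: the sum over m ≡ j (mod p) of p(p-1, N, m) equals (1/p)·C(p-1+N, N). -/

import Mathlib

open Finset

lemma map_univ_eq_ofFn {α : Type*} {N : ℕ} (f : Fin N → α) :
    Multiset.map f Finset.univ.val = ↑(List.ofFn f) := by
  simp [Finset.univ, Fintype.elems, List.ofFn_eq_map]

lemma anti_sorted {α : Type*} [LinearOrder α] {N : ℕ} {f : Fin N → α}
    (hf : ∀ i j : Fin N, i ≤ j → f j ≤ f i) : (List.ofFn f).Pairwise (· ≥ ·) := by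
  rw [List.pairwise_ofFn]
  intro i j hij
  exact hf i j hij.le

lemma anti_multiset_inj {α : Type*} [LinearOrder α] {N : ℕ} {f g : Fin N → α}
    (hf : ∀ i j : Fin N, i ≤ j → f j ≤ f i) (hg : ∀ i j : Fin N, i ≤ j → g j ≤ g i)
    (h : Multiset.map f Finset.univ.val = Multiset.map g Finset.univ.val) : f = g := by
  have hperm : List.Perm (List.ofFn f) (List.ofFn g) := by
    rw [← Multiset.coe_eq_coe, ← map_univ_eq_ofFn, ← map_univ_eq_ofFn, h]
  have := List.Perm.eq_of_pairwise' (anti_sorted hf) (anti_sorted hg) hperm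
  exact List.ofFn_injective this

lemma exists_anti_of_multiset {α : Type*} [LinearOrder α] {N : ℕ} (s : Multiset α)
    (hs : Multiset.card s = N) :
    ∃ f : Fin N → α, (∀ i j : Fin N, i ≤ j → f j ≤ f i) ∧
      Multiset.map f Finset.univ.val = s := by
  classical
  set l := Multiset.sort s (· ≥ ·) with hl
  have hlen : l.length = N := by rw [hl, Multiset.length_sort, hs]
  refine ⟨fun i => l.get (Fin.cast hlen.symm i), ?_, ?_⟩
  · intro i j hij
    have hsorted : l.Pairwise (· ≥ ·) := Multiset.pairwise_sort s _
    rcases eq_or_lt_of_le hij with h | h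
    · subst h; exact le_rfl
    · exact List.pairwise_iff_getElem.mp hsorted _ _ _ _ (by simpa using h)
  · have : List.ofFn (fun i => l.get (Fin.cast hlen.symm i)) = l := by
      apply List.ext_get (by simp [hlen])
      intro n h1 h2
      simp
    rw [map_univ_eq_ofFn, this, hl, Multiset.sort_eq]



/-- The number of partitions of n into at most N parts, each of size at most M. -/
def restrictedPartitions (M N n : ℕ) : ℕ :=
  ((Finset.univ : Finset (Fin N → Fin (M + 1))).filter
    (fun f => (∀ i j : Fin N, i ≤ j → (f j : ℕ) ≤ (f i : ℕ)) ∧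
      ∑ i, (f i : ℕ) = n)).card

/-- For an odd prime p, 1 ≤ N ≤ p-1 and any residue j mod p:
∑_{m ≡ j mod p} p(p-1, N, m) = C(p-1+N, N)/p. -/
theorem sum_restrictedPartitions_p_sub_one (p N j : ℕ)
    (hp : p.Prime) (hodd : Odd p) (hN1 : 1 ≤ N) (hN : N ≤ p - 1) (hj : j < p) :
    p * ∑ m ∈ (Finset.range ((p - 1) * N + 1)).filter (fun m => m % p = j),
        restrictedPartitions (p - 1) N m
      = (p - 1 + N).choose N := by
  classical
  haveI : Fact p.Prime := ⟨hp⟩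
  haveI : NeZero p := ⟨hp.ne_zero⟩
  set M := p - 1 with hMdef
  have hM : M + 1 = p := Nat.succ_pred_eq_of_pos hp.pos
  -- the set of antitone tuples with sum ≡ j mod p
  set A : Finset (Fin N → Fin (M + 1)) := Finset.univ.filter
    (fun f => (∀ i k : Fin N, i ≤ k → (f k : ℕ) ≤ (f i : ℕ)) ∧
      (∑ i, (f i : ℕ)) % p = j) with hA
  -- Step 1: LHS sum = A.card
  have step1 : ∑ m ∈ (Finset.range ((p - 1) * N + 1)).filter (fun m => m % p = j),
      restrictedPartitions (p - 1) N m = A.card := by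
    rw [Finset.card_eq_sum_card_fiberwise (f := fun f => ∑ i, (f i : ℕ))
      (t := (Finset.range ((p - 1) * N + 1)).filter (fun m => m % p = j))]
    · apply Finset.sum_congr rfl
      intro m hm
      rw [Finset.mem_filter, Finset.mem_range] at hm
      unfold restrictedPartitions
      congr 1
      rw [hA, Finset.filter_filter]
      apply Finset.filter_congr
      intro f _
      constructor
      · rintro ⟨h1, h2⟩
        exact ⟨⟨h1, by rw [h2, hm.2]⟩, h2⟩
      · rintro ⟨⟨h1, _⟩, h2⟩
        exact ⟨h1, h2⟩
    · intro f hf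
      rw [hA, Finset.mem_coe, Finset.mem_filter] at hf
      rw [Finset.mem_coe, Finset.mem_filter, Finset.mem_range]
      refine ⟨Nat.lt_succ_of_le ?_, hf.2.2⟩
      calc ∑ i, (f i : ℕ) ≤ ∑ _i : Fin N, M := Finset.sum_le_sum (fun i _ => Fin.is_le _)
        _ = (p - 1) * N := by simp [mul_comm, hMdef]
  -- the fibers in Sym (ZMod p) N
  set B : ZMod p → Finset (Sym (ZMod p) N) := fun t => Finset.univ.filter
    (fun s => (↑s : Multiset (ZMod p)).sum = t) with hB
  -- the injective cast
  have hcast_inj : Function.Injective (fun x : Fin (M + 1) => ((x : ℕ) : ZMod p)) := by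
    intro x y hxy
    have hx : ((x : ℕ) : ZMod p).val = (x : ℕ) := ZMod.val_cast_of_lt (by omega)
    have hy : ((y : ℕ) : ZMod p).val = (y : ℕ) := ZMod.val_cast_of_lt (by omega)
    apply Fin.ext
    rw [← hx, ← hy]
    exact congrArg ZMod.val hxy
  -- Step 2: A.card = (B j).card
  have step2 : A.card = (B (j : ZMod p)).card := by
    have hmk : ∀ f : Fin N → Fin (M + 1),
        Multiset.card (Multiset.map (fun k => ((f k : ℕ) : ZMod p)) Finset.univ.val) = N := by
      intro f; simp
    apply Finset.card_bij
      (fun f _ => Sym.mk (Multiset.map (fun k => ((f k : ℕ) : ZMod p)) Finset.univ.val) (hmk f))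
    · intro f hf
      rw [hA, Finset.mem_filter] at hf
      rw [hB, Finset.mem_filter]
      refine ⟨Finset.mem_univ _, ?_⟩
      show (Multiset.map (fun k => ((f k : ℕ) : ZMod p)) Finset.univ.val).sum = _
      rw [← Finset.sum_eq_multiset_sum, ← Nat.cast_sum, ← ZMod.natCast_mod, hf.2.2]
    · intro f hf g hg heq
      rw [hA, Finset.mem_filter] at hf hg
      have hmeq : Multiset.map (fun x : Fin (M+1) => ((x : ℕ) : ZMod p))
            (Multiset.map f Finset.univ.val)
          = Multiset.map (fun x : Fin (M+1) => ((x : ℕ) : ZMod p))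
            (Multiset.map g Finset.univ.val) := by
        rw [Multiset.map_map, Multiset.map_map]
        exact congrArg Subtype.val heq
      exact anti_multiset_inj hf.2.1 hg.2.1 (Multiset.map_injective hcast_inj hmeq)
    · intro s hs
      rw [hB, Finset.mem_filter] at hs
      set t : Multiset (Fin (M + 1)) := (↑s : Multiset (ZMod p)).map
        (fun z => (⟨z.val, by have := ZMod.val_lt z; omega⟩ : Fin (M + 1))) with ht
      have htc : Multiset.card t = N := by rw [ht, Multiset.card_map]; exact Sym.card_coe
      obtain ⟨f, hfanti, hfmap⟩ := exists_anti_of_multiset t htc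
      have hback : Multiset.map (fun k => ((f k : ℕ) : ZMod p)) Finset.univ.val
          = (↑s : Multiset (ZMod p)) := by
        have : (fun k => ((f k : ℕ) : ZMod p)) =
            (fun x : Fin (M+1) => ((x : ℕ) : ZMod p)) ∘ f := rfl
        rw [this, ← Multiset.map_map, hfmap, ht, Multiset.map_map]
        have : ∀ z : ZMod p, ((z.val : ℕ) : ZMod p) = z := fun z => ZMod.natCast_rightInverse z
        simp only [Function.comp]
        conv_rhs => rw [← Multiset.map_id (↑s : Multiset (ZMod p))]
        exact Multiset.map_congr rfl (fun z _ => this z)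
      have hsum : (∑ i, (f i : ℕ)) % p = j := by
        have h1 : ((∑ i, (f i : ℕ) : ℕ) : ZMod p) = (j : ZMod p) := by
          rw [Nat.cast_sum, Finset.sum_eq_multiset_sum, hback]
          exact hs.2
        have := (ZMod.natCast_eq_natCast_iff _ _ _).mp h1
        rwa [Nat.ModEq, Nat.mod_eq_of_lt hj] at this
      have hanti' : ∀ i k : Fin N, i ≤ k → (f k : ℕ) ≤ (f i : ℕ) := fun i k h => hfanti i k h
      refine ⟨f, ?_, ?_⟩
      · rw [hA, Finset.mem_filter]
        exact ⟨Finset.mem_univ _, hanti', hsum⟩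
      · exact Subtype.ext hback
  -- N is invertible mod p
  have hNz : (N : ZMod p) ≠ 0 := by
    rw [Ne, ZMod.natCast_eq_zero_iff]
    intro hdvd
    have := Nat.le_of_dvd (by omega) hdvd
    omega
  -- Step 3: all fibers have the same cardinality
  have step3 : ∀ t : ZMod p, (B t).card = (B (j : ZMod p)).card := by
    intro t
    set c : ZMod p := ((j : ZMod p) - t) * (N : ZMod p)⁻¹ with hc
    have hNc : (N : ZMod p) * c = (j : ZMod p) - t := by
      rw [hc, mul_comm ((j : ZMod p) - t), ← mul_assoc, mul_inv_cancel₀ hNz, one_mul]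
    have hsummap : ∀ (d : ZMod p) (s : Sym (ZMod p) N),
        (↑(Sym.map (· + d) s) : Multiset (ZMod p)).sum
          = (↑s : Multiset (ZMod p)).sum + (N : ZMod p) * d := by
      intro d s
      rw [Sym.coe_map]
      rw [show (fun x : ZMod p => x + d) = (fun x : ZMod p => id x + (fun _ => d) x) from rfl,
        Multiset.sum_map_add, Multiset.map_id, Multiset.map_const', Multiset.sum_replicate,
        Sym.card_coe, nsmul_eq_mul]
    have hmapmap : ∀ (d e : ZMod p) (s : Sym (ZMod p) N),
        Sym.map (· + e) (Sym.map (· + d) s) = Sym.map (fun x => x + d + e) s := by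
      intro d e s
      rw [Sym.map_map]
      rfl
    apply Finset.card_nbij' (fun s => Sym.map (· + c) s) (fun s => Sym.map (· + (-c)) s)
    · intro s hsm
      rw [hB, Finset.mem_coe, Finset.mem_filter] at hsm ⊢
      refine ⟨Finset.mem_univ _, ?_⟩
      rw [hsummap, hsm.2, hNc]
      ring
    · intro s hsm
      rw [hB, Finset.mem_coe, Finset.mem_filter] at hsm ⊢
      refine ⟨Finset.mem_univ _, ?_⟩
      rw [hsummap, hsm.2]
      have : (N : ZMod p) * (-c) = -((j : ZMod p) - t) := by rw [mul_neg, hNc]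
      rw [this]
      ring
    · intro s _
      dsimp only
      rw [hmapmap]
      have : (fun x : ZMod p => x + c + (-c)) = id := by funext x; simp
      rw [this, Sym.map_id]
    · intro s _
      dsimp only
      rw [hmapmap]
      have : (fun x : ZMod p => x + (-c) + c) = id := by funext x; simp
      rw [this, Sym.map_id]
  -- Step 4: summing fibers gives the whole Sym
  have step4 : ∑ t : ZMod p, (B t).card = (p - 1 + N).choose N := by
    have h1 : (Finset.univ : Finset (Sym (ZMod p) N)).card
        = ∑ t : ZMod p, (B t).card := by
      apply Finset.card_eq_sum_card_fiberwise
      intro s _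
      exact Finset.mem_univ _
    rw [← h1, Finset.card_univ, Sym.card_sym_eq_choose, ZMod.card]
    congr 1
    omega
  rw [step1, step2]
  calc p * (B (j : ZMod p)).card = ∑ _t : ZMod p, (B (j : ZMod p)).card := by
        rw [Finset.sum_const, Finset.card_univ, ZMod.card, smul_eq_mul]
    _ = ∑ t : ZMod p, (B t).card := by
        apply Finset.sum_congr rfl; intro t _; rw [step3 t]
    _ = (p - 1 + N).choose N := step4
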